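/- Let f: Σⁿ⁻¹ → Bⁿ⁻¹ ⊂ ℂⁿ⁻¹ be a Lagrangian immersion into the open unit ball (f*ω₀ = 0) with τ = −Σᵢ(xᵢdyᵢ − yᵢdxᵢ), satisfying ∫_{f(γ)} τ ∈ 2πℤ for all [γ] ∈ H₁(Σ;ℤ). Then the map f̃: Σ → S^{2n−1} ⊂ ℂⁿ given by f̃(x) = e^{it(x)}(f₁(x),...,f_{n−1}(x), √(1−|f(x)|²)), where t(x) = ∫_{f(γ_x)} τ for a path γ_x from a basepoint to x, is a well-defined Legendrian immersion with respect to α = (1/2)Σᵢ₌₁ⁿ(xᵢdyᵢ − yᵢdxᵢ)|_{S^{2n−1}}, i.e., f̃*α = 0. -/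

import Mathlib

open Real intervalIntegral
open scoped Manifold

/-- The lifted map of Theorem A, written along a curve `σ` in `Σ`: the `i`-th component of
`f̃ ∘ σ` is `u ↦ c(σ u) · (f(σ u)ᵢ` for `i < n−1`, and `c(σ u) · √(1−|f(σ u)|²)` for
`i = n−1)`, where `c = e^{it}` is the lifted phase. -/
noncomputable def liftAlongCurve {M : Type*} (n : ℕ) (c : M → ℂ)
    (f : M → Fin (n - 1) → ℂ) (σ : ℝ → M) (i : Fin n) : ℝ → ℂ :=
  fun u => c (σ u) *
    (if h : (i : ℕ) < n - 1 then f (σ u) ⟨i, h⟩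
      else ((Real.sqrt (1 - ∑ k, Complex.normSq (f (σ u) k)) : ℝ) : ℂ))


set_option linter.unusedSectionVars false
set_option maxHeartbeats 1000000
section AuxStmt16
open Real intervalIntegral Set

noncomputable def tauF {m : ℕ} (g : ℝ → Fin m → ℂ) (s : ℝ) : ℝ :=
  -(∑ i, ((g s i).re * (deriv g s i).im - (g s i).im * (deriv g s i).re))

noncomputable def TF {m : ℕ} (g : ℝ → Fin m → ℂ) : ℝ := ∫ s in (0:ℝ)..1, tauF g s

variable {m : ℕ}

lemma tauF_cont {g : ℝ → Fin m → ℂ} (hg : ContDiff ℝ (⊤:ℕ∞) g) : Continuous (tauF g) := by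
  have hd : Continuous (deriv g) := hg.continuous_deriv (by exact_mod_cast le_top)
  have h1 : ∀ i : Fin m, Continuous fun s => (g s i).re * (deriv g s i).im
      - (g s i).im * (deriv g s i).re := by
    intro i
    exact ((Complex.continuous_re.comp ((continuous_apply i).comp hg.continuous)).mul
        (Complex.continuous_im.comp ((continuous_apply i).comp hd))).sub
      ((Complex.continuous_im.comp ((continuous_apply i).comp hg.continuous)).mul
        (Complex.continuous_re.comp ((continuous_apply i).comp hd)))
  exact (continuous_finset_sum _ fun i _ => h1 i).neg

lemma deriv_comp_real {g : ℝ → Fin m → ℂ} {φ : ℝ → ℝ} (hg : ContDiff ℝ (⊤:ℕ∞) g)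
    (hφ : ContDiff ℝ (⊤:ℕ∞) φ) (s : ℝ) :
    deriv (fun u => g (φ u)) s = deriv φ s • deriv g (φ s) := by
  have h1 : HasDerivAt g (deriv g (φ s)) (φ s) :=
    ((hg.differentiable (by simp)) (φ s)).hasDerivAt
  have h2 : HasDerivAt φ (deriv φ s) s := ((hφ.differentiable (by simp)) s).hasDerivAt
  exact (h1.scomp s h2).deriv

lemma tauF_comp {g : ℝ → Fin m → ℂ} {φ : ℝ → ℝ} (hg : ContDiff ℝ (⊤:ℕ∞) g)
    (hφ : ContDiff ℝ (⊤:ℕ∞) φ) (s : ℝ) :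
    tauF (fun u => g (φ u)) s = deriv φ s * tauF g (φ s) := by
  have hder := deriv_comp_real hg hφ s
  simp only [tauF, hder, Pi.smul_apply, smul_eq_mul, Complex.real_smul,
    Complex.mul_im, Complex.mul_re, Complex.ofReal_re, Complex.ofReal_im]
  rw [mul_neg, Finset.mul_sum]
  congr 1
  refine Finset.sum_congr rfl fun i _ => by ring

lemma integral_tauF_comp {g : ℝ → Fin m → ℂ} {φ : ℝ → ℝ} (hg : ContDiff ℝ (⊤:ℕ∞) g)
    (hφ : ContDiff ℝ (⊤:ℕ∞) φ) (a b : ℝ) :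
    (∫ s in a..b, tauF (fun u => g (φ u)) s) = ∫ s in φ a..φ b, tauF g s := by
  rw [intervalIntegral.integral_congr (g := fun s => deriv φ s • (tauF g ∘ φ) s)
    (fun s _ => tauF_comp hg hφ s)]
  exact intervalIntegral.integral_comp_smul_deriv
    (fun x _ => ((hφ.differentiable (by simp)) x).hasDerivAt)
    ((hφ.continuous_deriv (by exact_mod_cast le_top)).continuousOn) (tauF_cont hg)

lemma tauF_congr_at {g₁ g₂ : ℝ → Fin m → ℂ} {s : ℝ} (h : g₁ =ᶠ[nhds s] g₂) :
    tauF g₁ s = tauF g₂ s := by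
  simp only [tauF, h.eq_of_nhds, h.deriv_eq]

noncomputable def rhoT (s : ℝ) : ℝ := Real.smoothTransition (3*s - 1)

lemma rhoT_contDiff : ContDiff ℝ (⊤:ℕ∞) rhoT :=
  Real.smoothTransition.contDiff.comp (by fun_prop)

lemma rhoT_zero {s : ℝ} (h : s ≤ 1/3) : rhoT s = 0 :=
  Real.smoothTransition.zero_of_nonpos (by linarith)

lemma rhoT_one {s : ℝ} (h : 2/3 ≤ s) : rhoT s = 1 :=
  Real.smoothTransition.one_of_one_le (by linarith)

section Curves

open scoped Manifold

variable {M : Type*} [TopologicalSpace M] [ChartedSpace (EuclideanSpace ℝ (Fin m)) M]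
  [IsManifold (𝓡 m) (⊤ : ℕ∞) M]

/-- curve reversal -/
def revC (γ : ℝ → M) : ℝ → M := fun s => γ (1 - s)

/-- flattened initial segment up to `u` -/
noncomputable def segC (γ : ℝ → M) (u : ℝ) : ℝ → M := fun s => γ (u * rhoT s)

/-- flattened concatenation -/
noncomputable def concC (γ₁ γ₂ : ℝ → M) : ℝ → M :=
  fun s => if s ≤ 1/2 then γ₁ (rhoT (2*s)) else γ₂ (rhoT (2*s - 1))

variable {γ γ₁ γ₂ : ℝ → M}

lemma sm_comp (hγ : ContMDiff 𝓘(ℝ, ℝ) (𝓡 m) (⊤ : ℕ∞) γ) {φ : ℝ → ℝ} (hφ : ContDiff ℝ (⊤:ℕ∞) φ) :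
    ContMDiff 𝓘(ℝ, ℝ) (𝓡 m) (⊤ : ℕ∞) (fun s => γ (φ s)) :=
  hγ.comp (contMDiff_iff_contDiff.mpr hφ)

lemma revC_sm (hγ : ContMDiff 𝓘(ℝ, ℝ) (𝓡 m) (⊤ : ℕ∞) γ) : ContMDiff 𝓘(ℝ, ℝ) (𝓡 m) (⊤ : ℕ∞) (revC γ) :=
  sm_comp hγ (by fun_prop)

lemma segC_sm (hγ : ContMDiff 𝓘(ℝ, ℝ) (𝓡 m) (⊤ : ℕ∞) γ) (u : ℝ) :
    ContMDiff 𝓘(ℝ, ℝ) (𝓡 m) (⊤ : ℕ∞) (segC γ u) :=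
  sm_comp hγ (ContDiff.mul contDiff_const rhoT_contDiff)

lemma segC_zero (u : ℝ) : segC γ u 0 = γ 0 := by
  simp [segC, rhoT_zero (by norm_num : (0:ℝ) ≤ 1/3)]

lemma segC_one (u : ℝ) : segC γ u 1 = γ u := by
  simp [segC, rhoT_one (by norm_num : (2:ℝ)/3 ≤ 1)]

lemma concC_zero : concC γ₁ γ₂ 0 = γ₁ 0 := by
  rw [concC]
  norm_num [rhoT_zero (by norm_num : (2:ℝ)*0 ≤ 1/3), rhoT_zero (by norm_num : (0:ℝ) ≤ 1/3)]

lemma concC_one : concC γ₁ γ₂ 1 = γ₂ 1 := by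
  rw [concC]
  norm_num [rhoT_one (by norm_num : (2:ℝ)/3 ≤ 2*1 - 1), rhoT_one (by norm_num : (2:ℝ)/3 ≤ 1)]

lemma concC_eq_left (h : γ₁ 1 = γ₂ 0) {s : ℝ} (hs : s < 7/12) :
    concC γ₁ γ₂ s = γ₁ (rhoT (2*s)) := by
  rw [concC]
  split_ifs with h'
  · rfl
  · push_neg at h'
    rw [rhoT_zero (by linarith), rhoT_one (by linarith), h]

lemma concC_eq_right (h : γ₁ 1 = γ₂ 0) {s : ℝ} (hs : 5/12 < s) :
    concC γ₁ γ₂ s = γ₂ (rhoT (2*s - 1)) := by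
  rw [concC]
  split_ifs with h'
  · rw [rhoT_one (by linarith), rhoT_zero (by linarith), h]
  · rfl

lemma concC_sm (hγ₁ : ContMDiff 𝓘(ℝ, ℝ) (𝓡 m) (⊤ : ℕ∞) γ₁) (hγ₂ : ContMDiff 𝓘(ℝ, ℝ) (𝓡 m) (⊤ : ℕ∞) γ₂)
    (h : γ₁ 1 = γ₂ 0) : ContMDiff 𝓘(ℝ, ℝ) (𝓡 m) (⊤ : ℕ∞) (concC γ₁ γ₂) := by
  intro s
  rcases lt_or_ge s (7/12 : ℝ) with hs | hs
  · have hA : ContMDiff 𝓘(ℝ, ℝ) (𝓡 m) (⊤ : ℕ∞) (fun u => γ₁ (rhoT (2*u))) :=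
      sm_comp hγ₁ (rhoT_contDiff.comp (by fun_prop))
    refine (hA s).congr_of_eventuallyEq ?_
    filter_upwards [Iio_mem_nhds hs] with x hx
    exact concC_eq_left h hx
  · have hB : ContMDiff 𝓘(ℝ, ℝ) (𝓡 m) (⊤ : ℕ∞) (fun u => γ₂ (rhoT (2*u - 1))) :=
      sm_comp hγ₂ (rhoT_contDiff.comp (by fun_prop))
    refine (hB s).congr_of_eventuallyEq ?_
    filter_upwards [Ioi_mem_nhds (show (5:ℝ)/12 < s by linarith)] with x hx
    exact concC_eq_right h hx

end Curves

section TFCurves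

open scoped Manifold

variable {M : Type*} [TopologicalSpace M] [ChartedSpace (EuclideanSpace ℝ (Fin m)) M]
  [IsManifold (𝓡 m) (⊤ : ℕ∞) M] {f : M → Fin m → ℂ} {γ γ₁ γ₂ : ℝ → M}

lemma contDiff_fg (hf : ContMDiff (𝓡 m) 𝓘(ℝ, Fin m → ℂ) (⊤ : ℕ∞) f)
    (hγ : ContMDiff 𝓘(ℝ, ℝ) (𝓡 m) (⊤ : ℕ∞) γ) : ContDiff ℝ (⊤:ℕ∞) (fun u => f (γ u)) :=
  contMDiff_iff_contDiff.mp (hf.comp hγ)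

lemma TF_rev (hf : ContMDiff (𝓡 m) 𝓘(ℝ, Fin m → ℂ) (⊤ : ℕ∞) f)
    (hγ : ContMDiff 𝓘(ℝ, ℝ) (𝓡 m) (⊤ : ℕ∞) γ) :
    TF (fun u => f (revC γ u)) = - TF (fun u => f (γ u)) := by
  have hg := contDiff_fg hf hγ
  have h2 := integral_tauF_comp (g := fun u => f (γ u)) (φ := fun s => 1 - s) hg
    (by fun_prop) 0 1
  rw [TF, TF, show (fun u => f (revC γ u)) = fun u => f (γ (1 - u)) from rfl, h2]
  norm_num
  exact intervalIntegral.integral_symm 0 1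

lemma TF_seg (hf : ContMDiff (𝓡 m) 𝓘(ℝ, Fin m → ℂ) (⊤ : ℕ∞) f)
    (hγ : ContMDiff 𝓘(ℝ, ℝ) (𝓡 m) (⊤ : ℕ∞) γ) (u : ℝ) :
    TF (fun s => f (segC γ u s)) = ∫ s in (0:ℝ)..u, tauF (fun v => f (γ v)) s := by
  have hg := contDiff_fg hf hγ
  have h2 := integral_tauF_comp (g := fun v => f (γ v)) (φ := fun s => u * rhoT s) hg
    (contDiff_const.mul rhoT_contDiff) 0 1
  rw [TF, show (fun s => f (segC γ u s)) = fun s => f (γ (u * rhoT s)) from rfl, h2,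
    rhoT_zero (by norm_num : (0:ℝ) ≤ 1/3), rhoT_one (by norm_num : (2:ℝ)/3 ≤ 1)]
  norm_num

lemma TF_conc (hf : ContMDiff (𝓡 m) 𝓘(ℝ, Fin m → ℂ) (⊤ : ℕ∞) f)
    (hγ₁ : ContMDiff 𝓘(ℝ, ℝ) (𝓡 m) (⊤ : ℕ∞) γ₁) (hγ₂ : ContMDiff 𝓘(ℝ, ℝ) (𝓡 m) (⊤ : ℕ∞) γ₂)
    (h : γ₁ 1 = γ₂ 0) :
    TF (fun u => f (concC γ₁ γ₂ u)) = TF (fun u => f (γ₁ u)) + TF (fun u => f (γ₂ u)) := by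
  have hgC := contDiff_fg hf (concC_sm hγ₁ hγ₂ h)
  have hg₁ := contDiff_fg hf hγ₁
  have hg₂ := contDiff_fg hf hγ₂
  have hcont := tauF_cont hgC
  have hsplit := intervalIntegral.integral_add_adjacent_intervals
    (a := 0) (b := 1/2) (c := 1) (f := tauF (fun u => f (concC γ₁ γ₂ u)))
    (μ := MeasureTheory.volume)
    (hcont.intervalIntegrable _ _) (hcont.intervalIntegrable _ _)
  have hL : (∫ s in (0:ℝ)..(1/2), tauF (fun u => f (concC γ₁ γ₂ u)) s)
      = TF (fun u => f (γ₁ u)) := by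
    have hcg : ∀ s ∈ Set.uIcc (0:ℝ) (1/2), tauF (fun u => f (concC γ₁ γ₂ u)) s
        = tauF (fun u => f (γ₁ (rhoT (2*u)))) s := by
      intro s hs
      rw [Set.uIcc_of_le (by norm_num)] at hs
      refine tauF_congr_at ?_
      filter_upwards [Iio_mem_nhds (show s < 7/12 by
        rcases hs with ⟨_, h2⟩; linarith)] with x hx
      rw [concC_eq_left h hx]
    rw [intervalIntegral.integral_congr hcg,
      integral_tauF_comp (g := fun u => f (γ₁ u)) (φ := fun s => rhoT (2*s)) hg₁
        (rhoT_contDiff.comp (by fun_prop)) 0 (1/2),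
      rhoT_zero (by norm_num : (2:ℝ)*0 ≤ 1/3), rhoT_one (by norm_num : (2:ℝ)/3 ≤ 2*(1/2)),
      TF]
  have hR : (∫ s in (1/2:ℝ)..1, tauF (fun u => f (concC γ₁ γ₂ u)) s)
      = TF (fun u => f (γ₂ u)) := by
    have hcg : ∀ s ∈ Set.uIcc (1/2:ℝ) 1, tauF (fun u => f (concC γ₁ γ₂ u)) s
        = tauF (fun u => f (γ₂ (rhoT (2*u - 1)))) s := by
      intro s hs
      rw [Set.uIcc_of_le (by norm_num)] at hs
      refine tauF_congr_at ?_
      filter_upwards [Ioi_mem_nhds (show (5:ℝ)/12 < s by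
        rcases hs with ⟨h2, _⟩; linarith)] with x hx
      rw [concC_eq_right h hx]
    rw [intervalIntegral.integral_congr hcg,
      integral_tauF_comp (g := fun u => f (γ₂ u)) (φ := fun s => rhoT (2*s - 1)) hg₂
        (rhoT_contDiff.comp (by fun_prop)) (1/2) 1,
      rhoT_zero (by norm_num : (2:ℝ)*(1/2) - 1 ≤ 1/3),
      rhoT_one (by norm_num : (2:ℝ)/3 ≤ 2*1 - 1), TF]
  rw [TF, ← hsplit, hL, hR]

lemma pathIndep (hf : ContMDiff (𝓡 m) 𝓘(ℝ, Fin m → ℂ) (⊤ : ℕ∞) f)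
    (h1 : ∀ γ : ℝ → M, ContMDiff 𝓘(ℝ, ℝ) (𝓡 m) (⊤ : ℕ∞) γ → γ 0 = γ 1 →
      ∃ k : ℤ, TF (fun u => f (γ u)) = 2 * π * k)
    (hγ₁ : ContMDiff 𝓘(ℝ, ℝ) (𝓡 m) (⊤ : ℕ∞) γ₁) (hγ₂ : ContMDiff 𝓘(ℝ, ℝ) (𝓡 m) (⊤ : ℕ∞) γ₂)
    (e0 : γ₁ 0 = γ₂ 0) (e1 : γ₁ 1 = γ₂ 1) :
    Complex.exp (Complex.I * (TF (fun u => f (γ₁ u)) : ℝ))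
      = Complex.exp (Complex.I * (TF (fun u => f (γ₂ u)) : ℝ)) := by
  have hjunc : γ₁ 1 = revC γ₂ 0 := by simpa [revC] using e1
  have hloop : concC γ₁ (revC γ₂) 0 = concC γ₁ (revC γ₂) 1 := by
    rw [concC_zero, concC_one, e0]; simp [revC]
  obtain ⟨k, hk⟩ := h1 _ (concC_sm hγ₁ (revC_sm hγ₂) hjunc) hloop
  rw [TF_conc hf hγ₁ (revC_sm hγ₂) hjunc, TF_rev hf hγ₂] at hk
  have hT : TF (fun u => f (γ₁ u)) = TF (fun u => f (γ₂ u)) + 2 * π * k := by linarith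
  rw [hT]
  push_cast
  rw [mul_add, Complex.exp_add]
  have : Complex.I * (2 * π * k) = k * (2 * π * Complex.I) := by ring
  rw [this, Complex.exp_int_mul_two_pi_mul_I, mul_one]

end TFCurves

section PathRel

open scoped Manifold

variable (m : ℕ) {M : Type*} [TopologicalSpace M] [ChartedSpace (EuclideanSpace ℝ (Fin m)) M]
  [IsManifold (𝓡 m) (⊤ : ℕ∞) M]

/-- smooth-path joinability -/
def SJ (x y : M) : Prop :=
  ∃ γ : ℝ → M, ContMDiff 𝓘(ℝ, ℝ) (𝓡 m) (⊤ : ℕ∞) γ ∧ γ 0 = x ∧ γ 1 = y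

variable {m}

lemma SJ_refl (x : M) : SJ m x x := ⟨fun _ => x, contMDiff_const, rfl, rfl⟩

lemma SJ_symm {x y : M} (h : SJ m x y) : SJ m y x := by
  obtain ⟨γ, hγ, h0, h1⟩ := h
  exact ⟨revC γ, revC_sm hγ, by simp [revC, h1], by simp [revC, h0]⟩

lemma SJ_trans {x y z : M} (h : SJ m x y) (h' : SJ m y z) : SJ m x z := by
  obtain ⟨γ₁, hγ₁, a0, a1⟩ := h
  obtain ⟨γ₂, hγ₂, b0, b1⟩ := h'
  exact ⟨concC γ₁ γ₂, concC_sm hγ₁ hγ₂ (a1.trans b0.symm), by rw [concC_zero, a0],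
    by rw [concC_one, b1]⟩

end PathRel


open scoped Manifold


end AuxStmt16

/-- Theorem A: Let `f : Σ → Bⁿ⁻¹ ⊂ ℂⁿ⁻¹` be a Lagrangian immersion of a
closed connected `(n−1)`-manifold into the open unit ball (`f*ω₀ = 0`), with
`τ = −Σᵢ(xᵢdyᵢ − yᵢdxᵢ)`, such that `∫_{f(γ)} τ ∈ 2πℤ` for every loop `γ` in `Σ`.  Then
the phase `e^{it(x)}`, `t(x) = ∫_{f(γₓ)} τ` over any path `γₓ` from a basepoint `x₀` to
`x`, is well defined, and the lift
`f̃(x) = e^{it(x)}(f₁(x),...,f_{n−1}(x), √(1−|f(x)|²)) ∈ S^{2n−1}` is Legendrian with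
respect to `α = (1/2)Σᵢ(xᵢdyᵢ − yᵢdxᵢ)|_{S^{2n−1}}`, i.e. `f̃*α = 0`: along every smooth
curve `σ` in `Σ`, `α(d(f̃∘σ)/du) = 0`. -/
theorem stmt_16
    {n : ℕ} (hn : 1 ≤ n)
    {M : Type*} [TopologicalSpace M] [ChartedSpace (EuclideanSpace ℝ (Fin (n - 1))) M]
    [IsManifold (𝓡 (n - 1)) (⊤ : ℕ∞) M] [CompactSpace M] [ConnectedSpace M]
    (f : M → (Fin (n - 1) → ℂ))
    (hf : ContMDiff (𝓡 (n - 1)) 𝓘(ℝ, Fin (n - 1) → ℂ) (⊤ : ℕ∞) f)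
    (hball : ∀ x, ∑ i, Complex.normSq (f x i) < 1)
    (himm : ∀ x, Function.Injective (mfderiv (𝓡 (n - 1)) 𝓘(ℝ, Fin (n - 1) → ℂ) f x))
    (hLag : ∀ (x : M) (u v : EuclideanSpace ℝ (Fin (n - 1))),
      ∑ i, ((mfderiv (𝓡 (n - 1)) 𝓘(ℝ, Fin (n - 1) → ℂ) f x u i).re *
            (mfderiv (𝓡 (n - 1)) 𝓘(ℝ, Fin (n - 1) → ℂ) f x v i).im
          - (mfderiv (𝓡 (n - 1)) 𝓘(ℝ, Fin (n - 1) → ℂ) f x u i).im *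
            (mfderiv (𝓡 (n - 1)) 𝓘(ℝ, Fin (n - 1) → ℂ) f x v i).re) = 0)
    (x₀ : M)
    (h1 : ∀ γ : ℝ → M, ContMDiff 𝓘(ℝ, ℝ) (𝓡 (n - 1)) (⊤ : ℕ∞) γ → γ 0 = γ 1 →
      ∃ m : ℤ, (∫ s in (0:ℝ)..1,
        -(∑ i, ((f (γ s) i).re * (deriv (fun u => f (γ u)) s i).im
              - (f (γ s) i).im * (deriv (fun u => f (γ u)) s i).re))) = 2 * π * m) :
    ∃ c : M → ℂ,
      (∀ (x : M) (γ : ℝ → M), ContMDiff 𝓘(ℝ, ℝ) (𝓡 (n - 1)) (⊤ : ℕ∞) γ → γ 0 = x₀ → γ 1 = x →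
        c x = Complex.exp (Complex.I * (∫ s in (0:ℝ)..1,
          -(∑ i, ((f (γ s) i).re * (deriv (fun u => f (γ u)) s i).im
                - (f (γ s) i).im * (deriv (fun u => f (γ u)) s i).re))))) ∧
      (∀ (σ : ℝ → M), ContMDiff 𝓘(ℝ, ℝ) (𝓡 (n - 1)) (⊤ : ℕ∞) σ → ∀ u : ℝ,
        (1 / 2) * ∑ i : Fin n,
          ((liftAlongCurve n c f σ i u).re * (deriv (liftAlongCurve n c f σ i) u).im
            - (liftAlongCurve n c f σ i u).im * (deriv (liftAlongCurve n c f σ i) u).re)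
          = 0) := by
  classical
  obtain ⟨m, rfl⟩ : ∃ m, n = m + 1 := ⟨n - 1, (Nat.succ_pred_eq_of_pos hn).symm⟩
  have h1' : ∀ γ : ℝ → M, ContMDiff 𝓘(ℝ, ℝ) (𝓡 (m + 1 - 1)) (⊤ : ℕ∞) γ → γ 0 = γ 1 →
      ∃ k : ℤ, TF (fun u => f (γ u)) = 2 * π * k := by
    intro γ hγ hl
    simpa [TF, tauF] using h1 γ hγ hl
  have hrep : ∀ x : M, SJ (m + 1 - 1) (Classical.epsilon (fun y => SJ (m + 1 - 1) y x)) x :=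
    fun x => Classical.epsilon_spec (p := fun y => SJ (m + 1 - 1) y x) ⟨x, SJ_refl x⟩
  have repEq : ∀ {x y : M}, SJ (m + 1 - 1) x y →
      Classical.epsilon (fun z => SJ (m + 1 - 1) z x)
        = Classical.epsilon (fun z => SJ (m + 1 - 1) z y) := by
    intro x y hxy
    congr 1
    funext z
    exact propext ⟨fun h => SJ_trans h hxy, fun h => SJ_trans h (SJ_symm hxy)⟩
  set base : M → M := fun x => if SJ (m + 1 - 1) x₀ x then x₀
    else Classical.epsilon (fun y => SJ (m + 1 - 1) y x) with hbasedef
  have hbase : ∀ x, SJ (m + 1 - 1) (base x) x := by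
    intro x
    rw [hbasedef]
    simp only
    split_ifs with h
    · exact h
    · exact hrep x
  have baseEq : ∀ {x y : M}, SJ (m + 1 - 1) x y → base x = base y := by
    intro x y hxy
    rw [hbasedef]
    simp only
    by_cases h : SJ (m + 1 - 1) x₀ x
    · rw [if_pos h, if_pos (SJ_trans h hxy)]
    · rw [if_neg h, if_neg (fun h' => h (SJ_trans h' (SJ_symm hxy))), repEq hxy]
  choose pγ hpsm hp0 hp1 using hbase
  set c : M → ℂ := fun x => Complex.exp (Complex.I * (TF (fun u => f (pγ x u)) : ℝ))
    with hcdef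
  have cEq : ∀ (x : M) (γ : ℝ → M), ContMDiff 𝓘(ℝ, ℝ) (𝓡 (m + 1 - 1)) (⊤ : ℕ∞) γ →
      γ 0 = base x → γ 1 = x →
      c x = Complex.exp (Complex.I * (TF (fun u => f (γ u)) : ℝ)) := by
    intro x γ hγ h0 h1g
    rw [hcdef]
    exact pathIndep hf h1' (hpsm x) hγ ((hp0 x).trans h0.symm) ((hp1 x).trans h1g.symm)
  refine ⟨c, ?_, ?_⟩
  · intro x γ hγ h0 h1g
    have hx : SJ (m + 1 - 1) x₀ x := ⟨γ, hγ, h0, h1g⟩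
    have hb : base x = x₀ := by rw [hbasedef]; simp only [if_pos hx]
    have hc := cEq x γ hγ (h0.trans hb.symm) h1g
    simpa [TF, tauF] using hc
  · intro σ hσ u₀
    have hgσ : ContDiff ℝ (⊤:ℕ∞) (fun u => f (σ u)) := contDiff_fg hf hσ
    have hbconst : ∀ u : ℝ, base (σ u) = base (σ 0) :=
      fun u => (baseEq ⟨segC σ u, segC_sm hσ u, segC_zero u, segC_one u⟩).symm
    have key : ∀ u : ℝ, c (σ u) = Complex.exp (Complex.I *
        ((TF (fun v => f (pγ (σ 0) v))
          + ∫ s in (0:ℝ)..u, tauF (fun v => f (σ v)) s : ℝ) : ℂ)) := by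
      intro u
      have hjunc : pγ (σ 0) 1 = segC σ u 0 := by rw [hp1, segC_zero]
      have h0c : concC (pγ (σ 0)) (segC σ u) 0 = base (σ u) := by
        rw [concC_zero, hp0, hbconst u]
      have h1c : concC (pγ (σ 0)) (segC σ u) 1 = σ u := by rw [concC_one, segC_one]
      rw [cEq (σ u) _ (concC_sm (hpsm (σ 0)) (segC_sm hσ u) hjunc) h0c h1c,
        TF_conc hf (hpsm (σ 0)) (segC_sm hσ u) hjunc, TF_seg hf hσ u]
    have hτc : Continuous (tauF (fun v => f (σ v))) := tauF_cont hgσ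
    set τ : ℝ := tauF (fun v => f (σ v)) u₀ with hτ
    have hInt : HasDerivAt (fun u => ∫ s in (0:ℝ)..u, tauF (fun v => f (σ v)) s) τ u₀ :=
      intervalIntegral.integral_hasDerivAt_right (hτc.intervalIntegrable _ _)
        (hτc.stronglyMeasurableAtFilter _ _) hτc.continuousAt
    have hC : HasDerivAt (fun u => c (σ u)) (Complex.I * τ * c (σ u₀)) u₀ := by
      have h2 : HasDerivAt (fun u => TF (fun v => f (pγ (σ 0) v))
          + ∫ s in (0:ℝ)..u, tauF (fun v => f (σ v)) s) τ u₀ :=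
        hInt.const_add _
      have h4 := ((h2.ofReal_comp).const_mul Complex.I).cexp
      have hfun : (fun u => c (σ u)) = fun u => Complex.exp (Complex.I *
          ((TF (fun v => f (pγ (σ 0) v))
            + ∫ s in (0:ℝ)..u, tauF (fun v => f (σ v)) s : ℝ) : ℂ)) := funext key
      rw [hfun]
      convert h4 using 1
      rw [← key u₀]
      ring
    set g : ℝ → Fin (m + 1 - 1) → ℂ := fun u => f (σ u) with hgdef
    have hgd : HasDerivAt g (deriv g u₀) u₀ :=
      ((hgσ.differentiable (by simp)) u₀).hasDerivAt
    have hgj : ∀ j : Fin (m + 1 - 1), HasDerivAt (fun u => g u j) (deriv g u₀ j) u₀ :=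
      fun j => (ContinuousLinearMap.proj (R := ℝ) (φ := fun _ : Fin (m + 1 - 1) => ℂ)
        j).hasFDerivAt.comp_hasDerivAt u₀ hgd
    have hre : ∀ j : Fin (m + 1 - 1),
        HasDerivAt (fun u => (g u j).re) ((deriv g u₀ j).re) u₀ :=
      fun j => Complex.reCLM.hasFDerivAt.comp_hasDerivAt u₀ (hgj j)
    have him : ∀ j : Fin (m + 1 - 1),
        HasDerivAt (fun u => (g u j).im) ((deriv g u₀ j).im) u₀ :=
      fun j => Complex.imCLM.hasFDerivAt.comp_hasDerivAt u₀ (hgj j)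
    set q : ℝ → ℝ := fun u => 1 - ∑ k, Complex.normSq (g u k) with hqdef
    have hqpos : 0 < q u₀ := by
      rw [hqdef]
      have := hball (σ u₀)
      simp only [hgdef]
      linarith
    set q' : ℝ := -(∑ k, ((deriv g u₀ k).re * (g u₀ k).re + (g u₀ k).re * (deriv g u₀ k).re
        + ((deriv g u₀ k).im * (g u₀ k).im + (g u₀ k).im * (deriv g u₀ k).im))) with hq'
    have hqd : HasDerivAt q q' u₀ := by
      rw [hqdef, hq']
      refine HasDerivAt.const_sub 1 ?_
      refine HasDerivAt.fun_sum ?_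
      intro k _
      have h := ((hre k).fun_mul (hre k)).fun_add ((him k).fun_mul (him k))
      simpa [Complex.normSq_apply] using h
    have hw : HasDerivAt (fun u => Real.sqrt (q u)) (1 / (2 * Real.sqrt (q u₀)) * q') u₀ := by
      have := (Real.hasDerivAt_sqrt hqpos.ne').comp u₀ hqd
      exact this
    have hwc : HasDerivAt (fun u => ((Real.sqrt (q u) : ℝ) : ℂ))
        ((1 / (2 * Real.sqrt (q u₀)) * q' : ℝ) : ℂ) u₀ := hw.ofReal_comp
    have hlift : ∀ j : Fin m, liftAlongCurve (m + 1) c f σ (Fin.castSucc j)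
        = fun u => c (σ u) * g u j := by
      intro j
      funext u
      simp only [liftAlongCurve, hgdef]
      rw [dif_pos (show ((Fin.castSucc j : Fin (m + 1)) : ℕ) < m + 1 - 1 from j.isLt)]
      rfl
    have hlast : liftAlongCurve (m + 1) c f σ (Fin.last m)
        = fun u => c (σ u) * ((Real.sqrt (q u) : ℝ) : ℂ) := by
      funext u
      simp only [liftAlongCurve, hqdef, hgdef]
      rw [dif_neg (by simp)]
    have hderivj : ∀ j : Fin m, deriv (liftAlongCurve (m + 1) c f σ (Fin.castSucc j)) u₀
        = Complex.I * τ * c (σ u₀) * g u₀ j + c (σ u₀) * deriv g u₀ j := by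
      intro j
      rw [hlift j]
      exact (hC.mul (hgj j)).deriv
    have hderivlast : deriv (liftAlongCurve (m + 1) c f σ (Fin.last m)) u₀
        = Complex.I * τ * c (σ u₀) * ((Real.sqrt (q u₀) : ℝ) : ℂ)
          + c (σ u₀) * ((1 / (2 * Real.sqrt (q u₀)) * q' : ℝ) : ℂ) := by
      rw [hlast]
      exact (hC.mul hwc).deriv
    have hab : (c (σ u₀)).re ^ 2 + (c (σ u₀)).im ^ 2 = 1 := by
      have habs : ‖c (σ u₀)‖ = 1 := by
        rw [key u₀, Complex.norm_exp]
        simp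
      have h2 := Complex.sq_norm (c (σ u₀))
      rw [habs] at h2
      rw [Complex.normSq_apply] at h2
      nlinarith [h2]
    have hsq : Real.sqrt (q u₀) ^ 2 = q u₀ := Real.sq_sqrt hqpos.le
    have hterm : ∀ j : Fin m,
        (liftAlongCurve (m + 1) c f σ (Fin.castSucc j) u₀).re
            * (deriv (liftAlongCurve (m + 1) c f σ (Fin.castSucc j)) u₀).im
          - (liftAlongCurve (m + 1) c f σ (Fin.castSucc j) u₀).im
            * (deriv (liftAlongCurve (m + 1) c f σ (Fin.castSucc j)) u₀).re
        = τ * ((g u₀ j).re ^ 2 + (g u₀ j).im ^ 2)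
          + ((g u₀ j).re * (deriv g u₀ j).im - (g u₀ j).im * (deriv g u₀ j).re) := by
      intro j
      rw [hderivj j, hlift j]
      simp only [Complex.mul_re, Complex.mul_im, Complex.add_re, Complex.add_im,
        Complex.I_re, Complex.I_im, Complex.ofReal_re, Complex.ofReal_im]
      linear_combination (τ * ((g u₀ j).re ^ 2 + (g u₀ j).im ^ 2)
        + ((g u₀ j).re * (deriv g u₀ j).im - (g u₀ j).im * (deriv g u₀ j).re)) * hab
    have hlastterm :
        (liftAlongCurve (m + 1) c f σ (Fin.last m) u₀).re
            * (deriv (liftAlongCurve (m + 1) c f σ (Fin.last m)) u₀).im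
          - (liftAlongCurve (m + 1) c f σ (Fin.last m) u₀).im
            * (deriv (liftAlongCurve (m + 1) c f σ (Fin.last m)) u₀).re
        = τ * q u₀ := by
      rw [hderivlast, hlast]
      simp only [Complex.mul_re, Complex.mul_im, Complex.add_re, Complex.add_im,
        Complex.I_re, Complex.I_im, Complex.ofReal_re, Complex.ofReal_im]
      linear_combination (τ * Real.sqrt (q u₀) ^ 2) * hab + τ * hsq
    have hτeq : (∑ j : Fin m, ((g u₀ j).re * (deriv g u₀ j).im
        - (g u₀ j).im * (deriv g u₀ j).re)) = -τ := by
      rw [hτ]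
      simp only [tauF, neg_neg, hgdef]
      rfl
    have hq0 : (∑ j : Fin m, ((g u₀ j).re ^ 2 + (g u₀ j).im ^ 2)) = 1 - q u₀ := by
      have h2 : (∑ j : Fin m, ((g u₀ j).re ^ 2 + (g u₀ j).im ^ 2))
          = ∑ k : Fin (m + 1 - 1), Complex.normSq (g u₀ k) := by
        refine Finset.sum_congr rfl fun j _ => ?_
        rw [Complex.normSq_apply]
        ring
      rw [h2, hqdef]
      ring
    rw [Fin.sum_univ_castSucc, Finset.sum_congr rfl (fun j _ => hterm j), hlastterm,
      Finset.sum_add_distrib, ← Finset.mul_sum, hτeq, hq0]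
    ring
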